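/- Let Δ be a root system with positive system Δ⁺ and let X₀ be an element of the dual space such that α(X₀) ∈ {0,1} for all α ∈ Δ⁺, with Δₙ⁺ := {α ∈ Δ⁺: α(X₀)=1} nonempty. If R is any positive system of Δ with R ∩ Δₙ⁺ ≠ ∅ (where Δₙ := Δₙ⁺ ∪ (−Δₙ⁺)), then R ∩ Δₙ⁺ contains a root which is simple in R. -/
import Mathlib


/-- If every root of `Δ⁺` takes value `0` or `1` on `X₀`, `Δₙ⁺` is the set of positive
roots with value `1`, and `R` is a positive system (every element of `R` is an
`ℕ`-combination of the simple roots `S` of `R`) with `R ∩ Δₙ⁺ ≠ ∅`, then `R ∩ Δₙ⁺`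
contains a root that is simple in `R`. -/
theorem stmt_3 {𝔞 : Type*} [AddCommGroup 𝔞] [Module ℝ 𝔞]
    (Δ Δplus : Set (Module.Dual ℝ 𝔞)) (X₀ : 𝔞)
    (hΔ : ∀ α, α ∈ Δ ↔ (α ∈ Δplus ∨ -α ∈ Δplus))
    (hpos : ∀ α ∈ Δplus, ¬ (-α ∈ Δplus))
    (hX₀ : ∀ α ∈ Δplus, α X₀ = 0 ∨ α X₀ = 1)
    (R : Set (Module.Dual ℝ 𝔞)) (hRΔ : R ⊆ Δ)
    (S : Finset (Module.Dual ℝ 𝔞))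
    -- `S` is the set of simple roots of `R`
    (hS : ∀ β, β ∈ S ↔ (β ∈ R ∧ ¬ ∃ γ ∈ R, ∃ δ ∈ R, β = γ + δ))
    -- every element of `R` is an `ℕ₀`-linear combination of the simple roots of `R`
    (hcomb : ∀ γ ∈ R, ∃ c : Module.Dual ℝ 𝔞 → ℕ,
        γ = ∑ β ∈ S, (c β : ℝ) • β)
    (hne : ∃ γ, γ ∈ R ∧ γ ∈ Δplus ∧ γ X₀ = 1) :
    ∃ β ∈ S, β ∈ Δplus ∧ β X₀ = 1 := by
  obtain ⟨γ, hγR, hγp, hγ1⟩ := hne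
  obtain ⟨c, hc⟩ := hcomb γ hγR
  have hsum : γ X₀ = ∑ β ∈ S, (c β : ℝ) * β X₀ := by
    rw [hc]
    simp [Module.Dual]
  -- some term is positive
  have hex : ∃ β ∈ S, 0 < (c β : ℝ) * β X₀ := by
    by_contra h
    push_neg at h
    have : γ X₀ ≤ 0 := by
      rw [hsum]
      exact Finset.sum_nonpos h
    linarith [hγ1 ▸ this]
  obtain ⟨β, hβS, hβpos⟩ := hex
  have hβX : 0 < β X₀ := by
    rcases lt_or_ge 0 (β X₀) with h | h
    · exact h
    · have : (c β : ℝ) * β X₀ ≤ 0 :=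
        mul_nonpos_of_nonneg_of_nonpos (by positivity) h
      linarith
  have hβR : β ∈ R := ((hS β).mp hβS).1
  have hβΔ : β ∈ Δplus ∨ -β ∈ Δplus := (hΔ β).mp (hRΔ hβR)
  rcases hβΔ with h | h
  · refine ⟨β, hβS, h, ?_⟩
    rcases hX₀ β h with h0 | h1
    · linarith
    · exact h1
  · exfalso
    rcases hX₀ _ h with h0 | h1
    · rw [LinearMap.neg_apply] at h0; linarith
    · rw [LinearMap.neg_apply] at h1; linarith
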